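/- Under the modular setup below, for every β₀ ∈ (0, ∞) and every h* ≥ 0 there exists a finite constant C (depending on μ, A, β₀, h*) such that: (i) ∫_{ {(h,h̄) : h ≥ h*} } e^{−βh − β̄ h̄} dμ(h, h̄) ≤ C · β̄^{−1/2} · e^{4π²A/β̄ − h* β} for all β ≥ β₀ ≥ β̄ > 0; and (ii) ∫_{ {(h,h̄) : h̄ ≥ h*} } e^{−βh − β̄ h̄} dμ(h, h̄) ≤ C · β^{−1/2} · e^{4π²A/β − h* β̄} for all β̄ ≥ β₀ ≥ β > 0. -/

import Mathlib

open MeasureTheory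

/-- The reduced partition function
`Z̃(β, β̄) = (1-e^{-β})(1-e^{-β̄}) + ∫ e^{-βh - β̄h̄} dμ(h,h̄)`. -/
noncomputable def Ztil (μ : Measure (ℝ × ℝ)) (β βb : ℝ) : ℝ :=
  (1 - Real.exp (-β)) * (1 - Real.exp (-βb)) +
    ∫ p : ℝ × ℝ, Real.exp (-β * p.1 - βb * p.2) ∂μ

/-- The modular crossing kernel
`K(β, β̄) = (2π/√(ββ̄)) exp(4π²A/β + 4π²A/β̄ - Aβ - Aβ̄)`. -/
noncomputable def Kker (A β βb : ℝ) : ℝ :=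
  2 * Real.pi / Real.sqrt (β * βb) *
    Real.exp (4 * Real.pi ^ 2 * A / β + 4 * Real.pi ^ 2 * A / βb - A * β - A * βb)

lemma aux12 (A T : ℝ) (hA : 0 < A) (hT : 0 < T) (μ : Measure (ℝ × ℝ))
    (hsupp : μ {p : ℝ × ℝ | p.1 < T ∨ p.2 < T} = 0)
    (hint : ∀ β βb : ℝ, 0 < β → 0 < βb →
      Integrable (fun p : ℝ × ℝ => Real.exp (-β * p.1 - βb * p.2)) μ)
    (hmod : ∀ β βb : ℝ, 0 < β → 0 < βb →
      Ztil μ β βb = Kker A β βb * Ztil μ (4 * Real.pi ^ 2 / β) (4 * Real.pi ^ 2 / βb))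
    (β₀ : ℝ) (hβ₀ : 0 < β₀) (hstar : ℝ) (hhstar : 0 ≤ hstar) :
    ∃ C : ℝ, 0 ≤ C ∧ (∀ β βb : ℝ, 0 < βb → βb ≤ β₀ → β₀ ≤ β →
        (∫ p in {p : ℝ × ℝ | hstar ≤ p.1}, Real.exp (-β * p.1 - βb * p.2) ∂μ) ≤
          C * βb ^ (-(1 : ℝ) / 2) * Real.exp (4 * Real.pi ^ 2 * A / βb - hstar * β)) := by
  have hae : ∀ᵐ p ∂μ, T ≤ p.1 ∧ T ≤ p.2 := by
    rw [ae_iff]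
    convert hsupp using 2
    ext p; simp only [Set.mem_setOf_eq, not_and_or, not_le]
  set s : ℝ := 4 * Real.pi ^ 2 / β₀ with hs
  have hπ : (0:ℝ) < Real.pi := Real.pi_pos
  have hspos : 0 < s := by positivity
  -- monotonicity of integrals
  have hmono : ∀ a a' b b' : ℝ, 0 < a → a ≤ a' → 0 < b → b ≤ b' →
      (∫ p : ℝ × ℝ, Real.exp (-a' * p.1 - b' * p.2) ∂μ) ≤
      (∫ p : ℝ × ℝ, Real.exp (-a * p.1 - b * p.2) ∂μ) := by
    intro a a' b b' ha ha' hb hb'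
    refine integral_mono_ae (hint a' b' (lt_of_lt_of_le ha ha') (lt_of_lt_of_le hb hb'))
      (hint a b ha hb) ?_
    filter_upwards [hae] with p hp
    have := hp.1; have := hp.2
    apply Real.exp_le_exp.mpr
    nlinarith
  set M : ℝ := 1 + ∫ p : ℝ × ℝ, Real.exp (-s * p.1 - s * p.2) ∂μ with hM
  have hMint : 0 ≤ ∫ p : ℝ × ℝ, Real.exp (-s * p.1 - s * p.2) ∂μ :=
    integral_nonneg fun p => (Real.exp_pos _).le
  have hM1 : 1 ≤ M := by rw [hM]; linarith
  refine ⟨Real.exp (hstar * β₀) * (2 * Real.pi / Real.sqrt β₀) *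
      Real.exp (4 * Real.pi ^ 2 * A / β₀) * M, by positivity, ?_⟩
  intro β βb hbb h1 h2
  have hβpos : 0 < β := lt_of_lt_of_le hβ₀ h2
  set t : ℝ := 4 * Real.pi ^ 2 / βb with ht
  have htpos : 0 < t := by positivity
  have hst : s ≤ t := by
    apply div_le_div_of_nonneg_left (by positivity) hbb h1
  -- Z̃(s,t) ≤ M
  have hZtM : Ztil μ s t ≤ M := by
    rw [Ztil, hM]
    gcongr ?_ + ?_
    · nlinarith [Real.exp_pos (-s), Real.exp_pos (-t), Real.exp_le_one_iff.mpr
        (neg_nonpos.mpr hspos.le), Real.exp_le_one_iff.mpr (neg_nonpos.mpr htpos.le)]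
    · exact hmono s s s t hspos le_rfl hspos hst
  -- ∫ g ≤ Z̃(β₀, βb)
  have hZnn : (∫ p : ℝ × ℝ, Real.exp (-β₀ * p.1 - βb * p.2) ∂μ) ≤ Ztil μ β₀ βb := by
    rw [Ztil]
    nlinarith [Real.exp_le_one_iff.mpr (neg_nonpos.mpr hβ₀.le),
      Real.exp_le_one_iff.mpr (neg_nonpos.mpr hbb.le), Real.exp_pos (-β₀), Real.exp_pos (-βb)]
  -- set integral step
  have hS : MeasurableSet {p : ℝ × ℝ | hstar ≤ p.1} :=
    measurableSet_le measurable_const measurable_fst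
  set c : ℝ := Real.exp (hstar * (β₀ - β)) with hc
  have step1 : (∫ p in {p : ℝ × ℝ | hstar ≤ p.1}, Real.exp (-β * p.1 - βb * p.2) ∂μ) ≤
      c * ∫ p : ℝ × ℝ, Real.exp (-β₀ * p.1 - βb * p.2) ∂μ := by
    have e1 : (∫ p in {p : ℝ × ℝ | hstar ≤ p.1}, Real.exp (-β * p.1 - βb * p.2) ∂μ) ≤
        ∫ p in {p : ℝ × ℝ | hstar ≤ p.1}, c * Real.exp (-β₀ * p.1 - βb * p.2) ∂μ := by
      refine setIntegral_mono_on ((hint β βb hβpos hbb).integrableOn)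
        (((hint β₀ βb hβ₀ hbb).const_mul c).integrableOn) hS ?_
      intro p hp
      rw [hc, ← Real.exp_add]
      apply Real.exp_le_exp.mpr
      have : hstar ≤ p.1 := hp
      nlinarith
    have e2 : (∫ p in {p : ℝ × ℝ | hstar ≤ p.1}, c * Real.exp (-β₀ * p.1 - βb * p.2) ∂μ)
        = c * ∫ p in {p : ℝ × ℝ | hstar ≤ p.1}, Real.exp (-β₀ * p.1 - βb * p.2) ∂μ :=
      integral_const_mul _ _
    have e3 : (∫ p in {p : ℝ × ℝ | hstar ≤ p.1}, Real.exp (-β₀ * p.1 - βb * p.2) ∂μ) ≤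
        ∫ p : ℝ × ℝ, Real.exp (-β₀ * p.1 - βb * p.2) ∂μ :=
      setIntegral_le_integral (hint β₀ βb hβ₀ hbb)
        (Filter.Eventually.of_forall fun p => (Real.exp_pos _).le)
    calc _ ≤ _ := e1
      _ = _ := e2
      _ ≤ _ := by
        have : 0 < c := Real.exp_pos _
        nlinarith
  -- Kker bound
  have hsqrt : Real.sqrt (β₀ * βb) = Real.sqrt β₀ * Real.sqrt βb :=
    Real.sqrt_mul hβ₀.le _
  have hrpow : βb ^ (-(1:ℝ)/2) = (Real.sqrt βb)⁻¹ := by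
    rw [show (-(1:ℝ)/2) = -(1/2 : ℝ) by norm_num, Real.rpow_neg hbb.le,
      ← Real.sqrt_eq_rpow]
  have hKb : Kker A β₀ βb ≤ (2 * Real.pi / Real.sqrt β₀) * βb ^ (-(1:ℝ)/2) *
      (Real.exp (4 * Real.pi ^ 2 * A / β₀) * Real.exp (4 * Real.pi ^ 2 * A / βb)) := by
    rw [Kker, hsqrt, hrpow, ← Real.exp_add]
    have h1' : Real.exp (4 * Real.pi ^ 2 * A / β₀ + 4 * Real.pi ^ 2 * A / βb - A * β₀ - A * βb)
        ≤ Real.exp (4 * Real.pi ^ 2 * A / β₀ + 4 * Real.pi ^ 2 * A / βb) := by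
      apply Real.exp_le_exp.mpr; nlinarith
    have h2' : 2 * Real.pi / (Real.sqrt β₀ * Real.sqrt βb)
        = 2 * Real.pi / Real.sqrt β₀ * (Real.sqrt βb)⁻¹ := by
      field_simp
    rw [h2']
    have hpos : 0 ≤ 2 * Real.pi / Real.sqrt β₀ * (Real.sqrt βb)⁻¹ := by positivity
    exact mul_le_mul_of_nonneg_left h1' hpos
  -- Z̃ nonneg
  have hZtnn : 0 ≤ Ztil μ s t := by
    rw [Ztil]
    have := integral_nonneg (μ := μ)
      (f := fun p : ℝ × ℝ => Real.exp (-s * p.1 - t * p.2)) fun p => (Real.exp_pos _).le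
    nlinarith [Real.exp_le_one_iff.mpr (neg_nonpos.mpr hspos.le),
      Real.exp_le_one_iff.mpr (neg_nonpos.mpr htpos.le), Real.exp_pos (-s), Real.exp_pos (-t)]
  have hKnn : 0 ≤ Kker A β₀ βb := by
    rw [Kker]; positivity
  -- assemble
  have hZb : Ztil μ β₀ βb ≤ Kker A β₀ βb * M := by
    rw [hmod β₀ βb hβ₀ hbb, ← hs, ← ht]
    exact mul_le_mul_of_nonneg_left hZtM hKnn
  have hcpos : 0 < c := Real.exp_pos _
  calc (∫ p in {p : ℝ × ℝ | hstar ≤ p.1}, Real.exp (-β * p.1 - βb * p.2) ∂μ)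
      ≤ c * ∫ p : ℝ × ℝ, Real.exp (-β₀ * p.1 - βb * p.2) ∂μ := step1
    _ ≤ c * (Kker A β₀ βb * M) := by
        apply mul_le_mul_of_nonneg_left _ hcpos.le
        exact le_trans hZnn hZb
    _ ≤ c * (((2 * Real.pi / Real.sqrt β₀) * βb ^ (-(1:ℝ)/2) *
        (Real.exp (4 * Real.pi ^ 2 * A / β₀) * Real.exp (4 * Real.pi ^ 2 * A / βb))) * M) := by
        apply mul_le_mul_of_nonneg_left _ hcpos.le
        apply mul_le_mul_of_nonneg_right hKb (by linarith)
    _ = Real.exp (hstar * β₀) * (2 * Real.pi / Real.sqrt β₀) *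
        Real.exp (4 * Real.pi ^ 2 * A / β₀) * M * βb ^ (-(1:ℝ)/2) *
        Real.exp (4 * Real.pi ^ 2 * A / βb - hstar * β) := by
        rw [hc, show 4 * Real.pi ^ 2 * A / βb - hstar * β
            = (4 * Real.pi ^ 2 * A / βb) + (-(hstar * β)) by ring,
          Real.exp_add, show hstar * (β₀ - β) = hstar * β₀ + (-(hstar*β)) by ring,
          Real.exp_add]
        ring

/-- Lemma 3.3, key lemma: bounds on the partial integrals of the
reduced partition function over `h ≥ h*` and over `h̄ ≥ h*`. -/
theorem stmt12 (A T : ℝ) (hA : 0 < A) (hT : 0 < T) (μ : Measure (ℝ × ℝ))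
    (hsupp : μ {p : ℝ × ℝ | p.1 < T ∨ p.2 < T} = 0)
    (hint : ∀ β βb : ℝ, 0 < β → 0 < βb →
      Integrable (fun p : ℝ × ℝ => Real.exp (-β * p.1 - βb * p.2)) μ)
    (hmod : ∀ β βb : ℝ, 0 < β → 0 < βb →
      Ztil μ β βb = Kker A β βb * Ztil μ (4 * Real.pi ^ 2 / β) (4 * Real.pi ^ 2 / βb))
    (β₀ : ℝ) (hβ₀ : 0 < β₀) (hstar : ℝ) (hhstar : 0 ≤ hstar) :
    ∃ C : ℝ,
      (∀ β βb : ℝ, 0 < βb → βb ≤ β₀ → β₀ ≤ β →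
        (∫ p in {p : ℝ × ℝ | hstar ≤ p.1}, Real.exp (-β * p.1 - βb * p.2) ∂μ) ≤
          C * βb ^ (-(1 : ℝ) / 2) * Real.exp (4 * Real.pi ^ 2 * A / βb - hstar * β)) ∧
      (∀ β βb : ℝ, 0 < β → β ≤ β₀ → β₀ ≤ βb →
        (∫ p in {p : ℝ × ℝ | hstar ≤ p.2}, Real.exp (-β * p.1 - βb * p.2) ∂μ) ≤
          C * β ^ (-(1 : ℝ) / 2) * Real.exp (4 * Real.pi ^ 2 * A / β - hstar * βb)) := by
  obtain ⟨C₁, hC₁nn, hC₁⟩ := aux12 A T hA hT μ hsupp hint hmod β₀ hβ₀ hstar hhstar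
  -- swapped measure
  set e : (ℝ × ℝ) ≃ᵐ (ℝ × ℝ) := MeasurableEquiv.prodComm with he
  set ν : Measure (ℝ × ℝ) := μ.map e with hν
  have hmap : ∀ (f : ℝ × ℝ → ℝ), (∫ p, f p ∂ν) = ∫ p, f (p.2, p.1) ∂μ := by
    intro f
    rw [hν, integral_map_equiv]
    rfl
  have hνsupp : ν {p : ℝ × ℝ | p.1 < T ∨ p.2 < T} = 0 := by
    rw [hν, MeasurableEquiv.map_apply]
    convert hsupp using 2
    ext p
    simp only [Set.mem_preimage, Set.mem_setOf_eq]
    constructor <;> (intro h; tauto)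
  have hνint : ∀ β βb : ℝ, 0 < β → 0 < βb →
      Integrable (fun p : ℝ × ℝ => Real.exp (-β * p.1 - βb * p.2)) ν := by
    intro β βb hb hbb
    rw [hν, integrable_map_equiv]
    have := hint βb β hbb hb
    convert this using 2 with p
    show Real.exp (-β * (e p).1 - βb * (e p).2) = _
    have : e p = (p.2, p.1) := rfl
    rw [this]
    ring_nf
  have hνZ : ∀ β βb : ℝ, Ztil ν β βb = Ztil μ βb β := by
    intro β βb
    rw [Ztil, Ztil, hmap]
    have : (∫ p : ℝ × ℝ, Real.exp (-β * (p.2, p.1).1 - βb * (p.2, p.1).2) ∂μ)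
        = ∫ p : ℝ × ℝ, Real.exp (-βb * p.1 - β * p.2) ∂μ := by
      congr 1; ext p; ring_nf
    rw [this]; ring
  have hKsymm : ∀ β βb : ℝ, Kker A β βb = Kker A βb β := by
    intro β βb
    rw [Kker, Kker, mul_comm β βb]
    ring_nf
  have hνmod : ∀ β βb : ℝ, 0 < β → 0 < βb →
      Ztil ν β βb = Kker A β βb * Ztil ν (4 * Real.pi ^ 2 / β) (4 * Real.pi ^ 2 / βb) := by
    intro β βb hb hbb
    rw [hνZ, hνZ, hmod βb β hbb hb, hKsymm]
  obtain ⟨C₂, hC₂nn, hC₂⟩ := aux12 A T hA hT ν hνsupp hνint hνmod β₀ hβ₀ hstar hhstar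
  refine ⟨max C₁ C₂, ?_, ?_⟩
  · intro β βb hbb h1 h2
    refine le_trans (hC₁ β βb hbb h1 h2) ?_
    have h3 : (0:ℝ) < βb ^ (-(1:ℝ)/2) := Real.rpow_pos_of_pos hbb _
    have h4 : (0:ℝ) < Real.exp (4 * Real.pi ^ 2 * A / βb - hstar * β) := Real.exp_pos _
    exact mul_le_mul_of_nonneg_right
      (mul_le_mul_of_nonneg_right (le_max_left C₁ C₂) h3.le) h4.le
  · intro β βb hb h1 h2
    have key := hC₂ βb β hb h1 h2
    have hbb : 0 < βb := lt_of_lt_of_le hβ₀ h2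
    have hset : (∫ p in {p : ℝ × ℝ | hstar ≤ p.1}, Real.exp (-βb * p.1 - β * p.2) ∂ν)
        = ∫ p in {p : ℝ × ℝ | hstar ≤ p.2}, Real.exp (-β * p.1 - βb * p.2) ∂μ := by
      rw [hν, setIntegral_map (measurableSet_le measurable_const measurable_fst)
        (Continuous.aestronglyMeasurable (by fun_prop)) e.measurable.aemeasurable]
      have hpre : e ⁻¹' {p : ℝ × ℝ | hstar ≤ p.1} = {p : ℝ × ℝ | hstar ≤ p.2} := by
        ext p; rfl
      rw [hpre]
      congr 1; ext p
      show Real.exp (-βb * (e p).1 - β * (e p).2) = _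
      have : e p = (p.2, p.1) := rfl
      rw [this]; ring_nf
    rw [hset] at key
    refine le_trans key ?_
    have h3 : (0:ℝ) < β ^ (-(1:ℝ)/2) := Real.rpow_pos_of_pos hb _
    have h4 : (0:ℝ) < Real.exp (4 * Real.pi ^ 2 * A / β - hstar * βb) := Real.exp_pos _
    exact mul_le_mul_of_nonneg_right
      (mul_le_mul_of_nonneg_right (le_max_right C₁ C₂) h3.le) h4.le
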